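/- arXiv:2101.08943 — 10 statements merged into one kernel-verified Lean document; each statement's English description precedes it below -/
import Mathlib

section
/- For any symmetric-parametrization list 𝒫 = ((μ_v, θ_v))_{v ∈ V}, the value of M on the plus transform satisfies M(𝒫⁺) = Σ_{v₀ ∈ V} Σ_{v₁ ∈ V} μ_{v₀}·μ_{v₁}·max{|θ_{v₀}|, |θ_{v₁}|}. -/
open Finset
open scoped Classical

noncomputable section

/-- The value `M(P) = ∑ v, μ v * |θ v|` of a symmetric-parametrization list
`P = ((μ v, θ v))_v`. -/
def Mval {V : Type*} [Fintype V] (μ θ : V → ℝ) : ℝ := ∑ v, μ v * |θ v|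

/-- Weights of the minus transform `P⁻`. -/
def minusμ {V : Type*} (μ : V → ℝ) : V × V → ℝ := fun p => μ p.1 * μ p.2

/-- Parameters of the minus transform `P⁻`. -/
def minusθ {V : Type*} (θ : V → ℝ) : V × V → ℝ := fun p => θ p.1 * θ p.2

/-- The sign `∓ᵤ` : `-1` when `u = 1` (`true`), `+1` when `u = 0` (`false`). -/
def sgn : Bool → ℝ := fun u => if u then -1 else 1

/-- Weights of the plus transform `P⁺`
(when `1 ∓ᵤ θ₀ θ₁ = 0` the formula yields `0`, matching the convention that the
entry is then `(0, 0)`). -/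
def plusμ {V : Type*} (μ θ : V → ℝ) : Bool × V × V → ℝ :=
  fun p => μ p.2.1 * μ p.2.2 * (1 + sgn p.1 * (θ p.2.1 * θ p.2.2)) / 2

/-- Parameters of the plus transform `P⁺`
(division by zero is `0` in Lean, matching the convention that the entry is
`(0, 0)` when `1 ∓ᵤ θ₀ θ₁ = 0`). -/
def plusθ {V : Type*} (θ : V → ℝ) : Bool × V × V → ℝ :=
  fun p => (θ p.2.2 + sgn p.1 * θ p.2.1) / (1 + sgn p.1 * (θ p.2.1 * θ p.2.2))

lemma key_lemma (a b s : ℝ) (ha : |a| ≤ 1) (hb : |b| ≤ 1) (hs : s = 1 ∨ s = -1) :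
    (1 + s * (a * b)) / 2 * |(b + s * a) / (1 + s * (a * b))| = |b + s * a| / 2 := by
  have ha2 : a ^ 2 ≤ 1 := by nlinarith [sq_abs a, abs_nonneg a]
  have hb2 : b ^ 2 ≤ 1 := by nlinarith [sq_abs b, abs_nonneg b]
  by_cases h : 1 + s * (a * b) = 0
  · have hnum : b + s * a = 0 := by
      have hsq : (b + s * a) ^ 2 = 0 := by
        rcases hs with rfl | rfl <;> nlinarith
      exact pow_eq_zero_iff (by norm_num) |>.mp hsq
    rw [h, hnum]
    simp
  · have hpos : 0 < 1 + s * (a * b) := by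
      rcases lt_or_ge 0 (1 + s * (a * b)) with h' | h'
      · exact h'
      · exfalso
        have hlt : 1 + s * (a * b) < 0 := lt_of_le_of_ne h' h
        rcases hs with rfl | rfl <;>
          nlinarith [sq_nonneg (a + b), sq_nonneg (a - b)]
    rw [abs_div, abs_of_pos hpos]
    rw [div_mul_div_comm, mul_comm (2:ℝ) (1 + s * (a * b)), mul_div_mul_left _ _ hpos.ne']

lemma max_abs_lemma (a b : ℝ) : |b + -1 * a| + |b + 1 * a| = 2 * max |a| |b| := by
  rcases abs_cases (b + -1 * a) with ⟨h1, _⟩ | ⟨h1, _⟩ <;>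
    rcases abs_cases (b + 1 * a) with ⟨h2, _⟩ | ⟨h2, _⟩ <;>
    rcases abs_cases a with ⟨h3, _⟩ | ⟨h3, _⟩ <;>
    rcases abs_cases b with ⟨h4, _⟩ | ⟨h4, _⟩ <;>
    rcases max_cases |a| |b| with ⟨h5, h6⟩ | ⟨h5, h6⟩ <;>
    rw [h1, h2, h5] at * <;> linarith

theorem stmt1 {V : Type*} [Fintype V] (μ θ : V → ℝ)
    (hμ : ∀ v, 0 ≤ μ v) (hsum : ∑ v, μ v = 1) (hθ : ∀ v, θ v ∈ Set.Icc (-1 : ℝ) 1) :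
    Mval (plusμ μ θ) (plusθ θ) = ∑ v₀, ∑ v₁, μ v₀ * μ v₁ * max |θ v₀| |θ v₁| := by
  have habs : ∀ v, |θ v| ≤ 1 := fun v => abs_le.mpr ⟨(hθ v).1, (hθ v).2⟩
  rw [Mval, Fintype.sum_prod_type, Fintype.sum_bool, Fintype.sum_prod_type,
    Fintype.sum_prod_type, ← Finset.sum_add_distrib]
  refine Finset.sum_congr rfl fun v₀ _ => ?_
  rw [← Finset.sum_add_distrib]
  refine Finset.sum_congr rfl fun v₁ _ => ?_
  simp only [plusμ, plusθ, sgn, Bool.false_eq_true, if_true, if_false]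
  have e1 : ∀ s X : ℝ, μ v₀ * μ v₁ * (1 + s * (θ v₀ * θ v₁)) / 2 * X
      = μ v₀ * μ v₁ * ((1 + s * (θ v₀ * θ v₁)) / 2 * X) := fun s X => by ring
  rw [e1, e1, key_lemma _ _ _ (habs v₀) (habs v₁) (Or.inr rfl),
    key_lemma _ _ _ (habs v₀) (habs v₁) (Or.inl rfl)]
  have := max_abs_lemma (θ v₀) (θ v₁)
  linear_combination (μ v₀ * μ v₁ / 2) * this


end
end

section
/- For any symmetric-parametrization list 𝒫, one has M(𝒫⁻) ≤ M(𝒫) ≤ M(𝒫⁺). -/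
open Finset
open scoped Classical

noncomputable section

lemma plus_term (s a b : ℝ) (hs2 : s^2 = 1) (ha : a^2 ≤ 1) (hb : b^2 ≤ 1) :
    (1 + s*(a*b))/2 * |(b + s*a)/(1 + s*(a*b))| = |b + s*a| / 2 := by
  have hd0 : 0 ≤ 1 + s*(a*b) := by nlinarith [sq_nonneg (a + s*b)]
  rcases eq_or_lt_of_le hd0 with h | h
  · have hsab : s*(a*b) = -1 := by linarith
    have hexp : (b + s*a)^2 = b^2 + 2*(s*(a*b)) + s^2*a^2 := by ring
    have hsa : s^2*a^2 = a^2 := by rw [hs2]; ring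
    have h2 : (b + s*a)^2 = 0 := le_antisymm (by nlinarith) (sq_nonneg _)
    have hba : b + s*a = 0 := by
      exact pow_eq_zero_iff (n := 2) (by norm_num) |>.mp h2
    rw [hba]; simp
  · rw [abs_div, abs_of_pos h]
    rw [div_mul_div_comm, mul_comm (1 + s*(a*b)) |b + s*a|, mul_div_mul_right _ _ h.ne']

theorem stmt2 {V : Type*} [Fintype V] (μ θ : V → ℝ)
    (hμ : ∀ v, 0 ≤ μ v) (hsum : ∑ v, μ v = 1) (hθ : ∀ v, θ v ∈ Set.Icc (-1 : ℝ) 1) :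
    Mval (minusμ μ) (minusθ θ) ≤ Mval μ θ ∧ Mval μ θ ≤ Mval (plusμ μ θ) (plusθ θ) := by
  have habs : ∀ v, |θ v| ≤ 1 := fun v => abs_le.2 (hθ v)
  have hsq : ∀ v, (θ v)^2 ≤ 1 := fun v => by
    have h := hθ v
    rw [Set.mem_Icc] at h
    nlinarith [h.1, h.2]
  have hM0 : 0 ≤ Mval μ θ :=
    Finset.sum_nonneg fun v _ => mul_nonneg (hμ v) (abs_nonneg _)
  have hM1 : Mval μ θ ≤ 1 := by
    rw [← hsum]
    exact Finset.sum_le_sum fun v _ => mul_le_of_le_one_right (hμ v) (habs v)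
  constructor
  · have hm : Mval (minusμ μ) (minusθ θ) = Mval μ θ * Mval μ θ := by
      unfold Mval minusμ minusθ
      rw [Fintype.sum_prod_type, Finset.sum_mul_sum]
      exact Finset.sum_congr rfl fun v0 _ => Finset.sum_congr rfl fun v1 _ => by
        rw [abs_mul]; ring
    rw [hm]
    nlinarith [hM0, hM1]
  · have key : Mval (plusμ μ θ) (plusθ θ)
        = ∑ p : V × V, μ p.1 * μ p.2 *
            ((|θ p.2 + -1 * θ p.1| + |θ p.2 + 1 * θ p.1|) / 2) := by
      unfold Mval plusμ plusθ
      rw [Fintype.sum_prod_type, Fintype.sum_bool, ← Finset.sum_add_distrib]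
      refine Finset.sum_congr rfl fun p _ => ?_
      simp only [show sgn true = -1 from rfl, show sgn false = 1 from rfl]
      have h1 := plus_term (-1) (θ p.1) (θ p.2) (by norm_num) (hsq p.1) (hsq p.2)
      have h0 := plus_term 1 (θ p.1) (θ p.2) (by norm_num) (hsq p.1) (hsq p.2)
      linear_combination (μ p.1 * μ p.2) * h1 + (μ p.1 * μ p.2) * h0
    have e : ∑ p : V × V, μ p.1 * μ p.2 * |θ p.2| = Mval μ θ := by
      rw [Fintype.sum_prod_type]
      have step : ∀ v0, ∑ v1, μ v0 * μ v1 * |θ v1| = μ v0 * Mval μ θ := fun v0 => by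
        unfold Mval
        rw [Finset.mul_sum]
        exact Finset.sum_congr rfl fun v1 _ => by ring
      simp_rw [step]
      rw [← Finset.sum_mul, hsum, one_mul]
    rw [key, ← e]
    refine Finset.sum_le_sum fun p _ => ?_
    have htri : 2 * |θ p.2| ≤ |θ p.2 + -1 * θ p.1| + |θ p.2 + 1 * θ p.1| := by
      have h := abs_add_le (θ p.2 + -1 * θ p.1) (θ p.2 + 1 * θ p.1)
      rw [show (θ p.2 + -1 * θ p.1) + (θ p.2 + 1 * θ p.1) = 2 * θ p.2 from by ring] at h
      rw [abs_mul] at h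
      simpa using h
    have hmm : 0 ≤ μ p.1 * μ p.2 := mul_nonneg (hμ p.1) (hμ p.2)
    nlinarith [htri, hmm]

end
end

section
/- For any symmetric-parametrization list 𝒫, one has M(𝒫⁻) + M(𝒫⁺) ≤ 2·M(𝒫). -/
open Finset
open scoped Classical

noncomputable section

lemma plus_term_s4 (x y : ℝ) (hx : |x| ≤ 1) (hy : |y| ≤ 1) (s : ℝ) (hs : s = 1 ∨ s = -1)
    (m : ℝ) :
    m * (1 + s * (x * y)) / 2 * |(y + s * x) / (1 + s * (x * y))|
      = m * |y + s * x| / 2 := by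
  have hx' := abs_le.mp hx
  have hy' := abs_le.mp hy
  have hd : 0 ≤ 1 + s * (x * y) := by
    rcases hs with h | h <;> subst h <;> nlinarith [hx'.1, hx'.2, hy'.1, hy'.2]
  rcases eq_or_lt_of_le hd with h0 | h0
  · have hnum : y + s * x = 0 := by
      have hsq : (y + s * x) ^ 2 ≤ 0 := by
        rcases hs with h | h <;> subst h <;> nlinarith [hx'.1, hx'.2, hy'.1, hy'.2]
      nlinarith [sq_nonneg (y + s * x)]
    rw [hnum, ← h0]
    simp
  · rw [abs_div, abs_of_pos h0]
    have hne : 1 + s * (x * y) ≠ 0 := h0.ne'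
    rw [div_mul_div_comm, div_eq_div_iff (mul_ne_zero two_ne_zero hne) two_ne_zero]
    ring

lemma pointwise (x y : ℝ) (hx : |x| ≤ 1) (hy : |y| ≤ 1) :
    |x * y| + (|y + -1 * x| / 2 + |y + 1 * x| / 2) ≤ |x| + |y| := by
  have h1 : |x * y| ≤ min |x| |y| := by
    rw [abs_mul]
    exact le_min (mul_le_of_le_one_right (abs_nonneg x) hy)
      (mul_le_of_le_one_left (abs_nonneg y) hx)
  have h2 : |y + -1 * x| / 2 + |y + 1 * x| / 2 ≤ max |x| |y| := by
    rcases abs_cases (y + -1 * x) with ⟨ha, _⟩ | ⟨ha, _⟩ <;>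
    rcases abs_cases (y + 1 * x) with ⟨hb, _⟩ | ⟨hb, _⟩ <;>
    rw [ha, hb] <;>
    linarith [le_max_left |x| |y|, le_max_right |x| |y|, le_abs_self x,
      neg_abs_le x, le_abs_self y, neg_abs_le y]
  have := min_add_max |x| |y|
  linarith

theorem stmt4 {V : Type*} [Fintype V] (μ θ : V → ℝ)
    (hμ : ∀ v, 0 ≤ μ v) (hsum : ∑ v, μ v = 1) (hθ : ∀ v, θ v ∈ Set.Icc (-1 : ℝ) 1) :
    Mval (minusμ μ) (minusθ θ) + Mval (plusμ μ θ) (plusθ θ) ≤ 2 * Mval μ θ := by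
  have hθ' : ∀ v, |θ v| ≤ 1 := fun v => abs_le.mpr (hθ v)
  have hplus : Mval (plusμ μ θ) (plusθ θ)
      = ∑ p : V × V, (μ p.1 * μ p.2 * |θ p.2 + -1 * θ p.1| / 2
          + μ p.1 * μ p.2 * |θ p.2 + 1 * θ p.1| / 2) := by
    rw [Mval, Fintype.sum_prod_type, Fintype.sum_bool, ← Finset.sum_add_distrib]
    refine Finset.sum_congr rfl fun p _ => ?_
    have e1 : sgn true = -1 := rfl
    have e2 : sgn false = 1 := rfl
    simp only [plusμ, plusθ, e1, e2]
    rw [plus_term_s4 (θ p.1) (θ p.2) (hθ' p.1) (hθ' p.2) (-1) (Or.inr rfl),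
        plus_term_s4 (θ p.1) (θ p.2) (hθ' p.1) (hθ' p.2) 1 (Or.inl rfl)]
  have hrhs : 2 * Mval μ θ
      = ∑ p : V × V, (μ p.1 * |θ p.1| * μ p.2 + μ p.1 * μ p.2 * |θ p.2|) := by
    rw [Finset.sum_add_distrib]
    have h1 : ∑ p : V × V, μ p.1 * |θ p.1| * μ p.2 = Mval μ θ := by
      rw [Fintype.sum_prod_type]
      simp only [← Finset.mul_sum, hsum, mul_one]
      rfl
    have h2 : ∑ p : V × V, μ p.1 * μ p.2 * |θ p.2| = Mval μ θ := by
      rw [Fintype.sum_prod_type]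
      simp only [mul_assoc, ← Finset.mul_sum]
      rw [← Finset.sum_mul, hsum, one_mul]
      rfl
    rw [h1, h2]
    ring
  rw [hplus, hrhs, Mval, ← Finset.sum_add_distrib]
  refine Finset.sum_le_sum fun p _ => ?_
  have hkey := pointwise (θ p.1) (θ p.2) (hθ' p.1) (hθ' p.2)
  have hm : 0 ≤ μ p.1 * μ p.2 := mul_nonneg (hμ p.1) (hμ p.2)
  have := mul_le_mul_of_nonneg_left hkey hm
  simp only [minusμ, minusθ]
  ring_nf
  ring_nf at this
  linarith

end
end

section
/- For any symmetric-parametrization list 𝒫 = ((μ_v, θ_v))_{v ∈ V}, define H(𝒫) := Σ_{v ∈ V} μ_v · h((1 − |θ_v|)/2). Then 0 ≤ 1 − M(𝒫) ≤ H(𝒫) ≤ h((1 − M(𝒫))/2) ≤ 1. -/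
open Finset
open scoped Classical

noncomputable section

/-- The binary entropy function `h(ξ) = -ξ·log₂ ξ - (1-ξ)·log₂(1-ξ)`, with the
convention `h 0 = 0` (automatic, since `Real.logb 2 0 = 0` in Lean). -/
def binEnt (ξ : ℝ) : ℝ := -(ξ * Real.logb 2 ξ) - (1 - ξ) * Real.logb 2 (1 - ξ)

lemma binEnt_eq (ξ : ℝ) : binEnt ξ = Real.binEntropy ξ / Real.log 2 := by
  simp [binEnt, Real.binEntropy, Real.logb, Real.log_inv]; ring

lemma concave_binEnt : ConcaveOn ℝ (Set.Icc (0:ℝ) 1) binEnt := by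
  have := (Real.strictConcave_binEntropy.concaveOn).smul
    (c := (Real.log 2)⁻¹) (by positivity)
  have h : binEnt = fun x => (Real.log 2)⁻¹ • Real.binEntropy x := by
    ext x; simp [binEnt_eq, div_eq_inv_mul, smul_eq_mul]
  rw [h]; exact this

lemma binEnt_zero : binEnt 0 = 0 := by simp [binEnt]

lemma binEnt_half : binEnt 2⁻¹ = 1 := by
  rw [binEnt_eq, Real.binEntropy_two_inv, div_self (Real.log_pos (by norm_num)).ne']

lemma binEnt_le_one (ξ : ℝ) : binEnt ξ ≤ 1 := by
  rw [binEnt_eq, div_le_one (Real.log_pos (by norm_num))]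
  exact Real.binEntropy_le_log_two

lemma two_mul_le_binEnt {ξ : ℝ} (h0 : 0 ≤ ξ) (h1 : ξ ≤ 2⁻¹) : 2 * ξ ≤ binEnt ξ := by
  have hy : (2⁻¹:ℝ) ∈ Set.Icc (0:ℝ) 1 := by norm_num
  have hx : (0:ℝ) ∈ Set.Icc (0:ℝ) 1 := by norm_num
  have := concave_binEnt.2 hx hy (show (0:ℝ) ≤ 1 - 2*ξ by linarith)
    (show (0:ℝ) ≤ 2*ξ by linarith) (by ring)
  have h2 : (1 - 2*ξ) • (0:ℝ) + (2*ξ) • (2⁻¹:ℝ) = ξ := by simp; ring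
  rw [h2] at this
  simpa [binEnt_zero, binEnt_half] using this

theorem stmt5 {V : Type*} [Fintype V] (μ θ : V → ℝ)
    (hμ : ∀ v, 0 ≤ μ v) (hsum : ∑ v, μ v = 1) (hθ : ∀ v, θ v ∈ Set.Icc (-1 : ℝ) 1) :
    0 ≤ 1 - Mval μ θ
    ∧ 1 - Mval μ θ ≤ ∑ v, μ v * binEnt ((1 - |θ v|) / 2)
    ∧ (∑ v, μ v * binEnt ((1 - |θ v|) / 2)) ≤ binEnt ((1 - Mval μ θ) / 2)
    ∧ binEnt ((1 - Mval μ θ) / 2) ≤ 1 := by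
  have habs : ∀ v, |θ v| ≤ 1 := fun v => abs_le.2 ⟨(hθ v).1, (hθ v).2⟩
  have hM1 : Mval μ θ ≤ 1 := by
    rw [← hsum]
    exact Finset.sum_le_sum fun v _ =>
      (mul_le_of_le_one_right (hμ v) (habs v))
  have hM0 : 0 ≤ Mval μ θ :=
    Finset.sum_nonneg fun v _ => mul_nonneg (hμ v) (abs_nonneg _)
  have hpt0 : ∀ v, (0:ℝ) ≤ (1 - |θ v|) / 2 := fun v => by
    have := habs v; linarith
  have hpt1 : ∀ v, (1 - |θ v|) / 2 ≤ 2⁻¹ := fun v => by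
    have := abs_nonneg (θ v); linarith
  refine ⟨by linarith, ?_, ?_, binEnt_le_one _⟩
  · have : ∀ v ∈ Finset.univ (α := V),
        μ v * (1 - |θ v|) ≤ μ v * binEnt ((1 - |θ v|) / 2) := fun v _ => by
      have h := two_mul_le_binEnt (hpt0 v) (hpt1 v)
      have : (1 - |θ v|) ≤ binEnt ((1 - |θ v|) / 2) := by linarith
      exact mul_le_mul_of_nonneg_left this (hμ v)
    have hle := Finset.sum_le_sum this
    have hL : ∑ v, μ v * (1 - |θ v|) = 1 - Mval μ θ := by
      simp [mul_sub, Finset.sum_sub_distrib, hsum, Mval]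
    linarith [hL ▸ hle]
  · have hJ := concave_binEnt.le_map_sum (t := Finset.univ) (w := μ)
      (p := fun v => (1 - |θ v|) / 2) (fun v _ => hμ v) hsum
      (fun v _ => Set.mem_Icc.2 ⟨hpt0 v, by
        have := hpt1 v; linarith⟩)
    have hpt : ∑ v, μ v • ((1 - |θ v|) / 2) = (1 - Mval μ θ) / 2 := by
      simp only [smul_eq_mul, Mval]
      rw [eq_div_iff (by norm_num : (2:ℝ) ≠ 0), Finset.sum_mul,
        show (1:ℝ) - ∑ v, μ v * |θ v| = ∑ v, (μ v - μ v * |θ v|) by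
          rw [Finset.sum_sub_distrib, hsum]]
      exact Finset.sum_congr rfl fun v _ => by ring
    rw [hpt] at hJ
    simpa using hJ

end
end

section
/- For any symmetric-parametrization list 𝒫 and either sign ± ∈ {−, +}, applying the absolute-value operator A before and after the transform gives the same list as applying it only after: (𝒫^A)^±, with A applied again, equals (𝒫^±)^A as multisets of weight–parameter pairs; that is, ((𝒫^A)^±)^A = (𝒫^±)^A as multisets. -/
open Finset
open scoped Classical

noncomputable section

/-- The multiset of weight–parameter pairs of a list (two lists are identified
when these multisets coincide). -/
def toMultiset {V : Type*} [Fintype V] (μ θ : V → ℝ) : Multiset (ℝ × ℝ) :=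
  Finset.univ.val.map fun v => (μ v, θ v)

theorem stmt6 {V : Type*} [Fintype V] (μ θ : V → ℝ)
    (hμ : ∀ v, 0 ≤ μ v) (hsum : ∑ v, μ v = 1) (hθ : ∀ v, θ v ∈ Set.Icc (-1 : ℝ) 1) :
    (toMultiset (minusμ μ) (fun p => |minusθ (fun v => |θ v|) p|)
      = toMultiset (minusμ μ) (fun p => |minusθ θ p|))
    ∧ (toMultiset (plusμ μ (fun v => |θ v|)) (fun p => |plusθ (fun v => |θ v|) p|)
      = toMultiset (plusμ μ θ) (fun p => |plusθ θ p|)) := by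
  constructor
  · unfold toMultiset
    congr 1
    funext p
    simp [minusθ, abs_mul]
  · -- the flipping permutation
    let e : Equiv.Perm (Bool × V × V) :=
      { toFun := fun p => (if θ p.2.1 * θ p.2.2 < 0 then !p.1 else p.1, p.2)
        invFun := fun p => (if θ p.2.1 * θ p.2.2 < 0 then !p.1 else p.1, p.2)
        left_inv := by
          intro p; by_cases h : θ p.2.1 * θ p.2.2 < 0 <;> simp [h]
        right_inv := by
          intro p; by_cases h : θ p.2.1 * θ p.2.2 < 0 <;> simp [h] }
    have key : ∀ p : Bool × V × V,
        (plusμ μ (fun v => |θ v|) p, |plusθ (fun v => |θ v|) p|)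
          = (plusμ μ θ (e p), |plusθ θ (e p)|) := by
      rintro ⟨u, v₀, v₁⟩
      set a := θ v₀ with ha
      set b := θ v₁ with hb
      have he : e (u, v₀, v₁) = (if a * b < 0 then !u else u, v₀, v₁) := rfl
      set u' : Bool := if a * b < 0 then !u else u with hu'
      have hs : sgn u * sgn u = 1 := by cases u <;> simp [sgn]
      have hs' : sgn u' * sgn u' = 1 := by cases u' <;> simp [sgn]
      have hsn : ∀ w : Bool, sgn (!w) = - sgn w := by intro w; cases w <;> simp [sgn]
      have hkey : sgn u' * (a * b) = sgn u * (|a| * |b|) := by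
        rw [← abs_mul]
        by_cases h : a * b < 0
        · have : u' = !u := by simp [hu', h]
          rw [this, hsn, abs_of_neg h]; ring
        · have : u' = u := by simp [hu', h]
          rw [this, abs_of_nonneg (not_lt.mp h)]
      have hD : (1 : ℝ) + sgn u * (|a| * |b|) = 1 + sgn u' * (a * b) := by
        rw [hkey]
      have hnum : |(|b| + sgn u * |a|)| = |b + sgn u' * a| := by
        have hsq : (|b| + sgn u * |a|) ^ 2 = (b + sgn u' * a) ^ 2 := by
          have h1 : |a| ^ 2 = a ^ 2 := sq_abs a
          have h2 : |b| ^ 2 = b ^ 2 := sq_abs b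
          nlinarith [hkey, hs, hs']
        simpa [abs_abs] using (sq_eq_sq_iff_abs_eq_abs _ _).mp hsq
      rw [he, Prod.mk.injEq]
      refine ⟨?_, ?_⟩
      · show μ v₀ * μ v₁ * (1 + sgn u * (|a| * |b|)) / 2
            = μ v₀ * μ v₁ * (1 + sgn u' * (a * b)) / 2
        rw [hD]
      · show |(|b| + sgn u * |a|) / (1 + sgn u * (|a| * |b|))|
            = |(b + sgn u' * a) / (1 + sgn u' * (a * b))|
        rw [abs_div, abs_div, hnum, hD]
    calc toMultiset (plusμ μ fun v => |θ v|) (fun p => |plusθ (fun v => |θ v|) p|)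
        = Finset.univ.val.map (fun p => (plusμ μ θ (e p), |plusθ θ (e p)|)) := by
          unfold toMultiset
          exact Multiset.map_congr rfl fun p _ => key p
      _ = toMultiset (plusμ μ θ) (fun p => |plusθ θ p|) := by
          unfold toMultiset
          rw [show (fun p => (plusμ μ θ (e p), |plusθ θ (e p)|))
              = (fun p => (plusμ μ θ p, |plusθ θ p|)) ∘ e from rfl,
            ← Multiset.map_map]
          congr 1
          exact congrArg Finset.val (Finset.map_univ_equiv e)

end
end

section
/- Let 𝒫 = ((μ_v, θ_v))_{v=1}^{C} be a symmetric-parametrization list indexed by {1, …, C} with Σ_{v=1}^{C} μ_v = 1 and 0 ≤ θ_1 < θ_2 < ⋯ < θ_C ≤ 1. Then M(𝒫⁺) = Σ_{v=1}^{C} μ_v·θ_v·(μ_v + 2·Σ_{v'=1}^{v−1} μ_{v'}). -/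
open Finset
open scoped Classical

noncomputable section

lemma abs_add_abs_sub' (a b : ℝ) (ha : 0 ≤ a) (hb : 0 ≤ b) :
    |b + -a| + |b + a| = 2 * max a b := by
  rcases le_total a b with h | h
  · rw [abs_of_nonneg (by linarith), abs_of_nonneg (by linarith), max_eq_right h]; ring
  · rw [abs_of_nonpos (by linarith), abs_of_nonneg (by linarith), max_eq_left h]; ring

theorem stmt11 (C : ℕ) (μ θ : Fin C → ℝ)
    (hμ : ∀ v, 0 ≤ μ v) (hsum : ∑ v, μ v = 1)
    (hθ0 : ∀ v, 0 ≤ θ v) (hθ1 : ∀ v, θ v ≤ 1) (hmono : StrictMono θ) :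
    Mval (plusμ μ θ) (plusθ θ)
      = ∑ v, μ v * θ v * (μ v + 2 * ∑ v' ∈ Finset.Iio v, μ v') := by
  have key : ∀ p : Bool × Fin C × Fin C,
      plusμ μ θ p * |plusθ θ p| = μ p.2.1 * μ p.2.2 * |θ p.2.2 + sgn p.1 * θ p.2.1| / 2 := by
    rintro ⟨u, v0, v1⟩
    simp only [plusμ, plusθ]
    set d : ℝ := 1 + sgn u * (θ v0 * θ v1) with hd
    have hd0 : 0 ≤ d := by
      have h01 : 0 ≤ θ v0 * θ v1 := mul_nonneg (hθ0 v0) (hθ0 v1)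
      have h11 : θ v0 * θ v1 ≤ 1 := by
        calc θ v0 * θ v1 ≤ 1 * 1 := mul_le_mul (hθ1 v0) (hθ1 v1) (hθ0 v1) zero_le_one
        _ = 1 := by ring
      cases u <;> simp only [sgn, if_true, if_false, Bool.false_eq_true, hd] <;> nlinarith
    rcases eq_or_lt_of_le hd0 with h0 | hpos
    · have hu : u = true := by
        cases u
        · exfalso
          simp only [sgn, Bool.false_eq_true, if_false, hd] at h0
          nlinarith [mul_nonneg (hθ0 v0) (hθ0 v1)]
        · rfl
      subst hu
      simp only [sgn, if_true, hd] at h0 ⊢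
      have h1 : θ v0 * θ v1 = 1 := by linarith
      have hv0 : θ v0 = 1 := by nlinarith [hθ1 v0, hθ1 v1, hθ0 v0, hθ0 v1]
      have hv1 : θ v1 = 1 := by nlinarith
      rw [hv0, hv1]; norm_num
    · rw [abs_div, abs_of_pos hpos]
      field_simp
  rw [Mval, Finset.sum_congr rfl fun p _ => key p, Fintype.sum_prod_type, Fintype.sum_bool,
    ← Finset.sum_add_distrib]
  have step2 : ∀ q : Fin C × Fin C,
      (μ q.1 * μ q.2 * |θ q.2 + sgn true * θ q.1| / 2
        + μ q.1 * μ q.2 * |θ q.2 + sgn false * θ q.1| / 2)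
      = μ q.1 * μ q.2 * θ (max q.1 q.2) := by
    rintro ⟨v0, v1⟩
    norm_num [sgn]
    have hm : θ (max v0 v1) = max (θ v0) (θ v1) := hmono.monotone.map_max
    have h2 := abs_add_abs_sub' (θ v0) (θ v1) (hθ0 v0) (hθ0 v1)
    rw [hm]
    linear_combination μ v0 * μ v1 / 2 * h2
  rw [Finset.sum_congr rfl fun q _ => step2 q, Fintype.sum_prod_type]
  have split : ∀ v0 : Fin C, ∑ v1, μ v0 * μ v1 * θ (max v0 v1)
      = μ v0 * θ v0 * ∑ v1 ∈ Iio v0, μ v1 + μ v0 * μ v0 * θ v0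
        + ∑ v1 ∈ Ioi v0, μ v0 * μ v1 * θ v1 := by
    intro v0
    have huniv : (univ : Finset (Fin C)) = Iio v0 ∪ Ici v0 := by
      ext x; simp [lt_or_ge]
    have hdisj : Disjoint (Iio v0) (Ici v0) := by
      rw [Finset.disjoint_left]; intro a ha hb
      exact absurd (mem_Ici.mp hb) (not_le.mpr (mem_Iio.mp ha))
    rw [huniv, Finset.sum_union hdisj, Ici_eq_cons_Ioi, Finset.sum_cons, max_self]
    rw [show ∑ v1 ∈ Iio v0, μ v0 * μ v1 * θ (max v0 v1)
          = ∑ v1 ∈ Iio v0, μ v0 * θ v0 * μ v1 from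
      Finset.sum_congr rfl fun v1 hv1 => by
        rw [max_eq_left (mem_Iio.mp hv1).le]; ring]
    rw [show ∑ v1 ∈ Ioi v0, μ v0 * μ v1 * θ (max v0 v1)
          = ∑ v1 ∈ Ioi v0, μ v0 * μ v1 * θ v1 from
      Finset.sum_congr rfl fun v1 hv1 => by
        rw [max_eq_right (mem_Ioi.mp hv1).le]]
    rw [← Finset.mul_sum]; ring
  rw [Finset.sum_congr rfl fun v0 _ => split v0]
  rw [Finset.sum_add_distrib]
  have swap : ∑ v0, ∑ v1 ∈ Ioi v0, μ v0 * μ v1 * θ v1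
      = ∑ v1, ∑ v0 ∈ Iio v1, μ v0 * μ v1 * θ v1 := by
    refine Finset.sum_comm' fun v0 v1 => ?_
    simp [mem_Ioi, mem_Iio]
  rw [swap]
  rw [← Finset.sum_add_distrib]
  refine Finset.sum_congr rfl fun v _ => ?_
  have h3 : ∑ v' ∈ Iio v, μ v' * μ v * θ v = μ v * θ v * ∑ v' ∈ Iio v, μ v' := by
    rw [Finset.mul_sum]; exact Finset.sum_congr rfl fun _ _ => by ring
  rw [h3]; ring


end
end

section
/- For any symmetric-parametrization list 𝒫, one has M(𝒫)·M(𝒫⁺) ≤ M((𝒫⁻)⁺) ≤ M((𝒫⁺)⁻); that is, the M-value after a minus transform followed by a plus transform is at least M(𝒫)·M(𝒫⁺) and at most the M-value after a plus transform followed by a minus transform. -/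
open Finset
open scoped Classical

noncomputable section

/-! ### Auxiliary lemmas -/

lemma aux_abs_add_abs_neg (x y : ℝ) : |y + x| + |y + -x| = 2 * max |x| |y| := by
  rcases le_total |x| |y| with h | h
  · rw [max_eq_right h]
    rcases abs_cases y with ⟨e, hy⟩ | ⟨e, hy⟩
    · have h1 := abs_le.mp (h.trans_eq e)
      rw [abs_of_nonneg (by linarith [h1.1, h1.2] : (0:ℝ) ≤ y + x),
        abs_of_nonneg (by linarith [h1.1, h1.2] : (0:ℝ) ≤ y + -x), e]; ring
    · have h1 := abs_le.mp (h.trans_eq e)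
      rw [abs_of_nonpos (by linarith [h1.1, h1.2] : y + x ≤ 0),
        abs_of_nonpos (by linarith [h1.1, h1.2] : y + -x ≤ 0), e]; ring
  · rw [max_eq_left h]
    rcases abs_cases x with ⟨e, hx⟩ | ⟨e, hx⟩
    · have h1 := abs_le.mp (h.trans_eq e)
      rw [abs_of_nonneg (by linarith [h1.1, h1.2] : (0:ℝ) ≤ y + x),
        abs_of_nonpos (by linarith [h1.1, h1.2] : y + -x ≤ 0), e]; ring
    · have h1 := abs_le.mp (h.trans_eq e)
      rw [abs_of_nonpos (by linarith [h1.1, h1.2] : y + x ≤ 0),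
        abs_of_nonneg (by linarith [h1.1, h1.2] : (0:ℝ) ≤ y + -x), e]; ring

lemma aux_plus_term (x y : ℝ) (hx : |x| ≤ 1) (hy : |y| ≤ 1) :
    (1 + x * y) / 2 * |(y + x) / (1 + x * y)| = |y + x| / 2 := by
  have hx2 : x ^ 2 ≤ 1 := by nlinarith [abs_nonneg x, sq_abs x]
  have hy2 : y ^ 2 ≤ 1 := by nlinarith [abs_nonneg y, sq_abs y]
  have h2 : 0 ≤ 1 + x * y := by nlinarith [sq_nonneg (x + y)]
  rcases h2.eq_or_lt with h0 | h0
  · have hyx : (y + x) ^ 2 ≤ 0 := by nlinarith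
    have : y + x = 0 := by
      have h3 : (y + x) ^ 2 = 0 := le_antisymm hyx (sq_nonneg _)
      exact pow_eq_zero_iff two_ne_zero |>.mp h3
    simp [this]
  · rw [abs_div, abs_of_pos h0]
    field_simp

lemma aux_Mval_plus {V : Type*} [Fintype V] (μ θ : V → ℝ) (hθ : ∀ v, |θ v| ≤ 1) :
    Mval (plusμ μ θ) (plusθ θ) = ∑ a, ∑ b, μ a * μ b * max |θ a| |θ b| := by
  rw [Mval, Fintype.sum_prod_type, Fintype.sum_bool, Fintype.sum_prod_type,
    Fintype.sum_prod_type, ← Finset.sum_add_distrib]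
  refine Finset.sum_congr rfl fun a _ => ?_
  rw [← Finset.sum_add_distrib]
  refine Finset.sum_congr rfl fun b _ => ?_
  simp only [plusμ, plusθ, sgn, if_true, if_false, Bool.false_eq_true]
  have h1 : (1:ℝ) + (-1) * (θ a * θ b) = 1 + -θ a * θ b := by ring
  have h2 : θ b + (-1) * θ a = θ b + -θ a := by ring
  have h3 : (1:ℝ) + 1 * (θ a * θ b) = 1 + θ a * θ b := by ring
  have h4 : θ b + 1 * θ a = θ b + θ a := by ring
  rw [h1, h2, h3, h4]
  have e1 := aux_plus_term (θ a) (θ b) (hθ a) (hθ b)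
  have e2 := aux_plus_term (-θ a) (θ b) (by rw [abs_neg]; exact hθ a) (hθ b)
  have e3 := aux_abs_add_abs_neg (θ a) (θ b)
  linear_combination (μ a * μ b) * e1 + (μ a * μ b) * e2 + (μ a * μ b) / 2 * e3

lemma aux_Mval_minus {W : Type*} [Fintype W] (ν φ : W → ℝ) :
    Mval (minusμ ν) (minusθ φ) = (Mval ν φ) ^ 2 := by
  rw [Mval, Fintype.sum_prod_type, Mval, sq, Finset.sum_mul_sum]
  refine Finset.sum_congr rfl fun a _ => Finset.sum_congr rfl fun b _ => ?_
  simp only [minusμ, minusθ, abs_mul]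
  ring

lemma aux_pw_left (xa xc xb xd : ℝ) :
    max xa xc * (xb + xd) ≤ max (xa * xb) (xc * xd) + max (xa * xd) (xc * xb) := by
  rcases le_total xa xc with h | h
  · rw [max_eq_right h]
    nlinarith [le_max_right (xa * xb) (xc * xd), le_max_right (xa * xd) (xc * xb)]
  · rw [max_eq_left h]
    nlinarith [le_max_left (xa * xb) (xc * xd), le_max_left (xa * xd) (xc * xb)]

lemma aux_pw_right (xa xc xb xd : ℝ) (ha : 0 ≤ xa) (hb : 0 ≤ xb) (hd : 0 ≤ xd) :
    max (xa * xb) (xc * xd) ≤ max xa xc * max xb xd := by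
  apply max_le
  · exact mul_le_mul (le_max_left _ _) (le_max_left _ _) hb (ha.trans (le_max_left _ _))
  · exact mul_le_mul (le_max_right _ _) (le_max_right _ _) hd (ha.trans (le_max_left _ _))

lemma aux_sum4_canon {V : Type*} [Fintype V] (μ x : V → ℝ) :
    (∑ a, ∑ b, ∑ c, ∑ d, (μ a * μ b) * (μ c * μ d) * max (x a * x b) (x c * x d))
      = ∑ a, ∑ c, (μ a * μ c) * ∑ b, ∑ d, (μ b * μ d) * max (x a * x b) (x c * x d) := by
  refine Finset.sum_congr rfl fun a _ => ?_
  rw [Finset.sum_comm]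
  refine Finset.sum_congr rfl fun c _ => ?_
  simp only [Finset.mul_sum]
  exact Finset.sum_congr rfl fun b _ => Finset.sum_congr rfl fun d _ => by ring

lemma aux_inner_swap {V : Type*} [Fintype V] (μ x : V → ℝ) (p q : ℝ) :
    (∑ b, ∑ d, (μ b * μ d) * max (p * x b) (q * x d))
      = ∑ b, ∑ d, (μ b * μ d) * max (p * x d) (q * x b) := by
  rw [Finset.sum_comm]
  exact Finset.sum_congr rfl fun b _ => Finset.sum_congr rfl fun d _ => by
    rw [mul_comm (μ d) (μ b)]

lemma aux_sumbd {V : Type*} [Fintype V] (μ x : V → ℝ) (hs : ∑ v, μ v = 1) :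
    ∑ b, ∑ d, (μ b * μ d) * (x b + x d) = 2 * ∑ v, μ v * x v := by
  have h : (∑ b, ∑ d, (μ b * μ d) * (x b + x d))
      = ∑ b, ∑ d, ((μ b * x b) * μ d + μ b * (μ d * x d)) :=
    Finset.sum_congr rfl fun b _ => Finset.sum_congr rfl fun d _ => by ring
  rw [h]
  simp only [Finset.sum_add_distrib]
  rw [← Finset.sum_mul_sum, ← Finset.sum_mul_sum, hs]
  ring

lemma aux_left_ineq {V : Type*} [Fintype V] (μ x : V → ℝ) (hμ : ∀ v, 0 ≤ μ v)
    (hs : ∑ v, μ v = 1) :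
    (∑ v, μ v * x v) * (∑ a, ∑ b, μ a * μ b * max (x a) (x b))
      ≤ ∑ a, ∑ c, (μ a * μ c) * ∑ b, ∑ d, (μ b * μ d) * max (x a * x b) (x c * x d) := by
  set A := ∑ v, μ v * x v with hA
  have hI : ∀ a c, max (x a) (x c) * A
      ≤ ∑ b, ∑ d, (μ b * μ d) * max (x a * x b) (x c * x d) := by
    intro a c
    set I := ∑ b, ∑ d, (μ b * μ d) * max (x a * x b) (x c * x d) with hIdef
    have hswap : I = ∑ b, ∑ d, (μ b * μ d) * max (x a * x d) (x c * x b) :=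
      aux_inner_swap μ x (x a) (x c)
    have hsum2 : ∑ b, ∑ d, (μ b * μ d) * (max (x a) (x c) * (x b + x d))
        = 2 * (max (x a) (x c) * A) := by
      calc ∑ b, ∑ d, (μ b * μ d) * (max (x a) (x c) * (x b + x d))
          = max (x a) (x c) * ∑ b, ∑ d, (μ b * μ d) * (x b + x d) := by
            simp only [Finset.mul_sum]
            exact Finset.sum_congr rfl fun b _ => Finset.sum_congr rfl fun d _ => by ring
        _ = _ := by rw [aux_sumbd μ x hs]; ring
    have hpt : ∑ b, ∑ d, (μ b * μ d) * (max (x a) (x c) * (x b + x d)) ≤ I + I := by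
      nth_rewrite 2 [hswap]
      rw [hIdef, ← Finset.sum_add_distrib]
      refine Finset.sum_le_sum fun b _ => ?_
      rw [← Finset.sum_add_distrib]
      refine Finset.sum_le_sum fun d _ => ?_
      have hbd : 0 ≤ μ b * μ d := mul_nonneg (hμ b) (hμ d)
      nlinarith [mul_le_mul_of_nonneg_left (aux_pw_left (x a) (x c) (x b) (x d)) hbd]
    linarith [hpt, hsum2]
  calc A * (∑ a, ∑ b, μ a * μ b * max (x a) (x b))
      = ∑ a, ∑ c, (μ a * μ c) * (max (x a) (x c) * A) := by
        rw [Finset.mul_sum]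
        refine Finset.sum_congr rfl fun a _ => ?_
        rw [Finset.mul_sum]
        exact Finset.sum_congr rfl fun c _ => by ring
    _ ≤ _ := Finset.sum_le_sum fun a _ => Finset.sum_le_sum fun c _ =>
        mul_le_mul_of_nonneg_left (hI a c) (mul_nonneg (hμ a) (hμ c))

lemma aux_right_ineq {V : Type*} [Fintype V] (μ x : V → ℝ) (hμ : ∀ v, 0 ≤ μ v)
    (hx0 : ∀ v, 0 ≤ x v) :
    (∑ a, ∑ c, (μ a * μ c) * ∑ b, ∑ d, (μ b * μ d) * max (x a * x b) (x c * x d))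
      ≤ (∑ a, ∑ b, μ a * μ b * max (x a) (x b))
        * (∑ a, ∑ b, μ a * μ b * max (x a) (x b)) := by
  set K := ∑ a, ∑ b, μ a * μ b * max (x a) (x b) with hK
  have hI : ∀ a c, (∑ b, ∑ d, (μ b * μ d) * max (x a * x b) (x c * x d))
      ≤ max (x a) (x c) * K := by
    intro a c
    calc ∑ b, ∑ d, (μ b * μ d) * max (x a * x b) (x c * x d)
        ≤ ∑ b, ∑ d, (μ b * μ d) * (max (x a) (x c) * max (x b) (x d)) := by
          refine Finset.sum_le_sum fun b _ => Finset.sum_le_sum fun d _ =>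
            mul_le_mul_of_nonneg_left
              (aux_pw_right (x a) (x c) (x b) (x d) (hx0 a) (hx0 b) (hx0 d))
              (mul_nonneg (hμ b) (hμ d))
      _ = max (x a) (x c) * K := by
          rw [hK]
          simp only [Finset.mul_sum]
          exact Finset.sum_congr rfl fun b _ => Finset.sum_congr rfl fun d _ => by ring
  calc (∑ a, ∑ c, (μ a * μ c) * ∑ b, ∑ d, (μ b * μ d) * max (x a * x b) (x c * x d))
      ≤ ∑ a, ∑ c, (μ a * μ c) * (max (x a) (x c) * K) :=
        Finset.sum_le_sum fun a _ => Finset.sum_le_sum fun c _ =>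
          mul_le_mul_of_nonneg_left (hI a c) (mul_nonneg (hμ a) (hμ c))
    _ = K * K := by
        rw [Finset.sum_mul]
        refine Finset.sum_congr rfl fun a _ => ?_
        rw [Finset.sum_mul]
        exact Finset.sum_congr rfl fun c _ => by ring

theorem stmt14 {V : Type*} [Fintype V] (μ θ : V → ℝ)
    (hμ : ∀ v, 0 ≤ μ v) (hsum : ∑ v, μ v = 1) (hθ : ∀ v, θ v ∈ Set.Icc (-1 : ℝ) 1) :
    Mval μ θ * Mval (plusμ μ θ) (plusθ θ)
      ≤ Mval (plusμ (minusμ μ) (minusθ θ)) (plusθ (minusθ θ))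
    ∧ Mval (plusμ (minusμ μ) (minusθ θ)) (plusθ (minusθ θ))
      ≤ Mval (minusμ (plusμ μ θ)) (minusθ (plusθ θ)) := by
  have hx1 : ∀ v, |θ v| ≤ 1 := fun v => abs_le.mpr ⟨(hθ v).1, (hθ v).2⟩
  have hx0 : ∀ v : V, (0:ℝ) ≤ |θ v| := fun v => abs_nonneg _
  have hm1 : ∀ p : V × V, |minusθ θ p| ≤ 1 := by
    intro p
    rw [minusθ, abs_mul]
    nlinarith [hx1 p.1, hx1 p.2, abs_nonneg (θ p.1), abs_nonneg (θ p.2)]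
  have hMplus := aux_Mval_plus μ θ hx1
  have hMmid := aux_Mval_plus (minusμ μ) (minusθ θ) hm1
  have hmid2 : Mval (plusμ (minusμ μ) (minusθ θ)) (plusθ (minusθ θ))
      = ∑ a, ∑ c, (μ a * μ c)
          * ∑ b, ∑ d, (μ b * μ d) * max (|θ a| * |θ b|) (|θ c| * |θ d|) := by
    rw [hMmid, Fintype.sum_prod_type]
    have e : ∀ a b : V,
        (∑ q : V × V, minusμ μ (a, b) * minusμ μ q * max |minusθ θ (a, b)| |minusθ θ q|)
          = ∑ c, ∑ d, (μ a * μ b) * (μ c * μ d) * max (|θ a| * |θ b|) (|θ c| * |θ d|) := by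
      intro a b
      rw [Fintype.sum_prod_type]
      refine Finset.sum_congr rfl fun c _ => Finset.sum_congr rfl fun d _ => ?_
      simp only [minusμ, minusθ, abs_mul]
    simp only [e]
    exact aux_sum4_canon μ (fun v => |θ v|)
  constructor
  · rw [hmid2, hMplus, Mval]
    exact aux_left_ineq μ (fun v => |θ v|) hμ hsum
  · rw [hmid2, aux_Mval_minus, hMplus, sq]
    exact aux_right_ineq μ (fun v => |θ v|) hμ hx0
end
end

section
/- Let 𝒫 = ((μ_v, θ_v))_{v=1}^{i} be a symmetric-parametrization list indexed by {1, …, i} with μ_v > 0 for all v, Σ_{v=1}^{i} μ_v = 1, and 0 ≤ θ_1 < θ_2 < ⋯ < θ_i ≤ 1, and fix j ∈ {1, …, i−1}. Let 𝒫' be the list obtained from 𝒫 by replacing the two entries (μ_j, θ_j) and (μ_{j+1}, θ_{j+1}) with the single entry (μ_j + μ_{j+1}, (μ_j·θ_j + μ_{j+1}·θ_{j+1})/(μ_j + μ_{j+1})). Then M(𝒫⁺) − M(𝒫'⁺) = μ_j·μ_{j+1}·(θ_{j+1} − θ_j); in particular this degrading merge strictly decreases the M-value after the plus transform. -/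
open Finset
open scoped Classical

noncomputable section

/-- auxiliary quadratic kernel -/
def q2 (p q : ℝ × ℝ) : ℝ := p.1 * q.1 * max p.2 q.2

/-- auxiliary bilinear form on multisets -/
def Bq (S T : Multiset (ℝ × ℝ)) : ℝ :=
  (S.map (fun p => (T.map (fun q => q2 p q)).sum)).sum

lemma q2_comm (p q : ℝ × ℝ) : q2 p q = q2 q p := by
  simp [q2, max_comm, mul_comm]

lemma Bq_add_left (S T U : Multiset (ℝ × ℝ)) : Bq (S + T) U = Bq S U + Bq T U := by
  simp [Bq]

lemma Bq_add_right (S T U : Multiset (ℝ × ℝ)) : Bq S (T + U) = Bq S T + Bq S U := by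
  simp [Bq, Multiset.sum_map_add]

lemma Bq_comm (S T : Multiset (ℝ × ℝ)) : Bq S T = Bq T S := by
  induction S using Multiset.induction with
  | empty => simp [Bq]
  | cons a S ih =>
    simp only [Bq, Multiset.map_cons, Multiset.sum_cons] at *
    rw [Multiset.sum_map_add, ← ih]
    congr 1
    exact congrArg Multiset.sum (Multiset.map_congr rfl fun x _ => q2_comm a x)

/-- the per-pair identity  -/
lemma core_pair (a b : ℝ) (ha0 : 0 ≤ a) (ha1 : a ≤ 1) (hb0 : 0 ≤ b) (hb1 : b ≤ 1) :
    (1 + a * b) / 2 * |(b + a) / (1 + a * b)| +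
      (1 - a * b) / 2 * |(b - a) / (1 - a * b)| = max a b := by
  have hab0 : 0 ≤ a * b := mul_nonneg ha0 hb0
  have h1 : (0:ℝ) < 1 + a * b := by linarith
  have hab1 : a * b ≤ 1 := by nlinarith
  have t1 : (1 + a * b) / 2 * |(b + a) / (1 + a * b)| = (b + a) / 2 := by
    rw [abs_of_nonneg (div_nonneg (by linarith) h1.le)]
    field_simp
  rw [t1]
  rcases eq_or_lt_of_le hab1 with h | h
  · have ha : a = 1 := by nlinarith
    have hb : b = 1 := by nlinarith
    subst ha; subst hb; norm_num
  · have h2 : (0:ℝ) < 1 - a * b := by linarith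
    have t2 : (1 - a * b) / 2 * |(b - a) / (1 - a * b)| = |b - a| / 2 := by
      rw [abs_div, abs_of_pos h2]
      field_simp
    rw [t2]
    rcases le_total a b with h3 | h3
    · rw [abs_of_nonneg (by linarith), max_eq_right h3]; ring
    · rw [abs_of_nonpos (by linarith), max_eq_left h3]; ring

lemma Mval_plus {V : Type*} [Fintype V] (μ θ : V → ℝ)
    (h0 : ∀ v, 0 ≤ θ v) (h1 : ∀ v, θ v ≤ 1) :
    Mval (plusμ μ θ) (plusθ θ) = ∑ v0, ∑ v1, μ v0 * μ v1 * max (θ v0) (θ v1) := by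
  rw [Mval, Fintype.sum_prod_type, Fintype.sum_bool, ← Finset.sum_add_distrib,
    Fintype.sum_prod_type]
  refine Finset.sum_congr rfl fun v0 _ => Finset.sum_congr rfl fun v1 _ => ?_
  have := core_pair (θ v0) (θ v1) (h0 v0) (h1 v0) (h0 v1) (h1 v1)
  have key : μ v0 * μ v1 * (1 + (-1) * (θ v0 * θ v1)) / 2 *
        |(θ v1 + (-1) * θ v0) / (1 + (-1) * (θ v0 * θ v1))| +
      μ v0 * μ v1 * (1 + 1 * (θ v0 * θ v1)) / 2 *
        |(θ v1 + 1 * θ v0) / (1 + 1 * (θ v0 * θ v1))| =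
      μ v0 * μ v1 * max (θ v0) (θ v1) := by
    have h2 : (1 : ℝ) + (-1) * (θ v0 * θ v1) = 1 - θ v0 * θ v1 := by ring
    have h3 : (θ v1 + (-1) * θ v0 : ℝ) = θ v1 - θ v0 := by ring
    have h4 : (1 : ℝ) + 1 * (θ v0 * θ v1) = 1 + θ v0 * θ v1 := by ring
    have h5 : (θ v1 + 1 * θ v0 : ℝ) = θ v1 + θ v0 := by ring
    rw [h2, h3, h4, h5]
    linear_combination (μ v0 * μ v1) * this
  simp only [plusμ, plusθ, sgn] at *
  norm_num at *
  linarith [key]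


lemma Bq_toMultiset {V : Type*} [Fintype V] (μ θ : V → ℝ) :
    Bq (toMultiset μ θ) (toMultiset μ θ)
      = ∑ v0, ∑ v1, μ v0 * μ v1 * max (θ v0) (θ v1) := by
  simp only [Bq, toMultiset, Multiset.map_map, Function.comp, q2,
    Finset.sum_eq_multiset_sum]

theorem stmt16 {W : Type*} [Fintype W] (i : ℕ) (μ θ : Fin i → ℝ)
    (hμ : ∀ v, 0 < μ v) (hsum : ∑ v, μ v = 1)
    (hθ0 : ∀ v, 0 ≤ θ v) (hθ1 : ∀ v, θ v ≤ 1) (hmono : StrictMono θ)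
    (j : ℕ) (hj : j + 1 < i)
    (μ' θ' : W → ℝ)
    (hrepl : toMultiset μ' θ'
        + {(μ ⟨j, by omega⟩, θ ⟨j, by omega⟩), (μ ⟨j + 1, hj⟩, θ ⟨j + 1, hj⟩)}
      = toMultiset μ θ
        + {(μ ⟨j, by omega⟩ + μ ⟨j + 1, hj⟩,
            (μ ⟨j, by omega⟩ * θ ⟨j, by omega⟩ + μ ⟨j + 1, hj⟩ * θ ⟨j + 1, hj⟩)
              / (μ ⟨j, by omega⟩ + μ ⟨j + 1, hj⟩))}) :
    Mval (plusμ μ θ) (plusθ θ) - Mval (plusμ μ' θ') (plusθ θ')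
        = μ ⟨j, by omega⟩ * μ ⟨j + 1, hj⟩ * (θ ⟨j + 1, hj⟩ - θ ⟨j, by omega⟩)
    ∧ Mval (plusμ μ' θ') (plusθ θ') < Mval (plusμ μ θ) (plusθ θ) := by

  have hj0 : j < i := Nat.lt_of_succ_lt hj
  set p0 : Fin i := ⟨j, hj0⟩ with hp0def
  set p1 : Fin i := ⟨j + 1, hj⟩ with hp1def
  set m0 : ℝ := μ p0 with hm0def
  set m1 : ℝ := μ p1 with hm1def
  set t0 : ℝ := θ p0 with ht0def
  set t1 : ℝ := θ p1 with ht1def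
  set tc : ℝ := (m0 * t0 + m1 * t1) / (m0 + m1) with htcdef
  have hm0 : 0 < m0 := hμ p0
  have hm1 : 0 < m1 := hμ p1
  have hms : 0 < m0 + m1 := by linarith
  have ht01 : t0 < t1 := hmono (by simp [hp0def, hp1def, Fin.lt_def])
  have htc : (m0 + m1) * tc = m0 * t0 + m1 * t1 := by
    rw [htcdef]; field_simp
  have ht0c : t0 ≤ tc := by
    rw [htcdef, le_div_iff₀ hms]; nlinarith
  have htc1 : tc ≤ t1 := by
    rw [htcdef, div_le_iff₀ hms]; nlinarith
  have htc0 : 0 ≤ tc := le_trans (hθ0 p0) ht0c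
  have htcle1 : tc ≤ 1 := le_trans htc1 (hθ1 p1)
  clear htcdef
  clear_value tc
  set S : Multiset (ℝ × ℝ) := toMultiset μ θ with hSdef
  set S' : Multiset (ℝ × ℝ) := toMultiset μ' θ' with hS'def
  set T : Multiset (ℝ × ℝ) := {(m0, t0), (m1, t1)} with hTdef
  set C : Multiset (ℝ × ℝ) := {(m0 + m1, tc)} with hCdef
  have hrepl' : S' + T = S + C := hrepl
  -- bounds on θ'
  have hθ'b : ∀ w : W, 0 ≤ θ' w ∧ θ' w ≤ 1 := by
    intro w
    have h : (μ' w, θ' w) ∈ S' + T :=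
      Multiset.mem_add.mpr (Or.inl (Multiset.mem_map.mpr
        ⟨w, (by simp), rfl⟩))
    rw [hrepl'] at h
    rcases Multiset.mem_add.mp h with h | h
    · obtain ⟨v, -, hv⟩ := Multiset.mem_map.mp h
      have : θ v = θ' w := congrArg Prod.snd hv
      rw [← this]
      exact ⟨hθ0 v, hθ1 v⟩
    · rw [hCdef, Multiset.mem_singleton] at h
      have : θ' w = tc := congrArg Prod.snd h
      rw [this]
      exact ⟨htc0, htcle1⟩
  -- M values as Bq values
  have HM : Mval (plusμ μ θ) (plusθ θ) = Bq S S :=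
    (Mval_plus μ θ hθ0 hθ1).trans (Bq_toMultiset μ θ).symm
  have HM' : Mval (plusμ μ' θ') (plusθ θ') = Bq S' S' :=
    (Mval_plus μ' θ' (fun w => (hθ'b w).1) (fun w => (hθ'b w).2)).trans
      (Bq_toMultiset μ' θ').symm
  -- key cancellation
  have hSC : Bq S T = Bq S C := by
    unfold Bq
    congr 1
    refine Multiset.map_congr rfl fun p hp => ?_
    obtain ⟨v, -, hv⟩ := Multiset.mem_map.mp hp
    rw [← hv, hTdef, hCdef]
    simp only [Multiset.insert_eq_cons, Multiset.map_cons, Multiset.sum_cons,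
      Multiset.map_singleton, Multiset.sum_singleton, q2]
    rcases Nat.lt_or_ge v.val (j + 1) with hvj | hvj
    · have hle : v ≤ p0 := by
        rw [Fin.le_def]; exact Nat.lt_succ_iff.mp hvj
      have h0 : θ v ≤ t0 := hmono.monotone hle
      rw [max_eq_right h0, max_eq_right (le_trans h0 (le_of_lt ht01)),
        max_eq_right (le_trans h0 ht0c)]
      linear_combination (-(μ v)) * htc
    · have hle : p1 ≤ v := by
        rw [Fin.le_def]; exact hvj
      have h1 : t1 ≤ θ v := hmono.monotone hle
      rw [max_eq_left (le_trans (le_of_lt ht01) h1), max_eq_left h1,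
        max_eq_left (le_trans htc1 h1)]
      ring
  have hCS : Bq T S = Bq C S := by rw [Bq_comm T S, hSC, Bq_comm]
  -- expansions
  have hB := congrArg (fun X => Bq X X) hrepl'
  simp only [Bq_add_left, Bq_add_right] at hB
  have hT1 : Bq S' T + Bq T T = Bq S T + Bq C T := by
    have : Bq (S' + T) T = Bq (S + C) T := by rw [hrepl']
    simpa only [Bq_add_left] using this
  have hT2 : Bq T S' + Bq T T = Bq T S + Bq T C := by
    have : Bq T (S' + T) = Bq T (S + C) := by rw [hrepl']
    simpa only [Bq_add_right] using this
  -- concrete values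
  have hval : Bq C T + Bq T C - Bq T T - Bq C C = m0 * m1 * (t1 - t0) := by
    rw [hTdef, hCdef]
    simp only [Bq, Multiset.insert_eq_cons, Multiset.map_cons, Multiset.sum_cons,
      Multiset.map_singleton, Multiset.sum_singleton, q2]
    simp only [max_self, max_eq_left ht0c, max_eq_right htc1, max_eq_right ht0c,
      max_eq_left htc1, max_eq_right ht01.le, max_eq_left ht01.le]
    linear_combination (m0 - m1) * htc
  have main : Bq S S - Bq S' S' = m0 * m1 * (t1 - t0) := by
    linarith [hB, hT1, hT2, hSC, hCS, hval]
  refine ⟨?_, ?_⟩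
  · rw [HM, HM']; exact main
  · rw [HM, HM']
    have hpos : 0 < m0 * m1 * (t1 - t0) := by
      apply mul_pos (mul_pos hm0 hm1); linarith
    linarith [main]

end
end

section
/- Let C ≥ 2, let μ_1, …, μ_C be positive reals with Σ_{v=1}^{C} μ_v = 1, and let 0 ≤ θ_1 < θ_2 < ⋯ < θ_C ≤ 1. Then min_{1 ≤ v ≤ C−1} μ_v·μ_{v+1}·(θ_{v+1} − θ_v) ≤ (1 − μ_C)·(1 − μ_1)·(θ_C − θ_1)/(C − 1)³, and consequently this minimum is at most θ_C/(C − 1)³. -/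
open Finset

lemma amgm {n : ℕ} (hn : 0 < n) (f : Fin n → ℝ) (hf : ∀ i, 0 ≤ f i) :
    ∏ i, f i ≤ ((∑ i, f i) / n) ^ n := by
  have h := Real.geom_mean_le_arith_mean_weighted Finset.univ
      (fun _ : Fin n => (1 : ℝ) / n) f (fun i _ => by positivity)
      (by simp [Finset.sum_const]; field_simp) (fun i _ => hf i)
  have h2 : (∏ i, f i ^ ((1 : ℝ) / n)) ^ n ≤ ((∑ i, f i) / n) ^ n := by
    apply pow_le_pow_left₀ (Finset.prod_nonneg fun i _ => Real.rpow_nonneg (hf i) _)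
    calc ∏ i, f i ^ ((1 : ℝ) / n) ≤ ∑ i, (1 : ℝ) / n * f i := h
      _ = (∑ i, f i) / n := by rw [← Finset.mul_sum]; ring
  calc ∏ i, f i = (∏ i, f i ^ ((1 : ℝ) / n)) ^ n := by
        rw [← Finset.prod_pow]
        refine Finset.prod_congr rfl fun i _ => ?_
        rw [← Real.rpow_natCast (f i ^ ((1:ℝ)/n)) n, ← Real.rpow_mul (hf i)]
        rw [one_div, inv_mul_cancel₀ (by exact_mod_cast hn.ne'), Real.rpow_one]
    _ ≤ _ := h2

lemma min_le_avg3 {n : ℕ} (hn : 0 < n) (a b c : Fin n → ℝ)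
    (ha : ∀ i, 0 < a i) (hb : ∀ i, 0 < b i) (hc : ∀ i, 0 < c i)
    (hne : (Finset.univ : Finset (Fin n)).Nonempty) :
    Finset.univ.inf' hne (fun i => a i * b i * c i)
      ≤ (∑ i, a i) * (∑ i, b i) * (∑ i, c i) / n ^ 3 := by
  set m := Finset.univ.inf' hne (fun i => a i * b i * c i) with hm
  have hmpos : 0 < m := by
    obtain ⟨i, _, hi⟩ := Finset.exists_mem_eq_inf' hne (fun i => a i * b i * c i)
    rw [hm, hi]; exact mul_pos (mul_pos (ha i) (hb i)) (hc i)
  have hpown : m ^ n ≤ ((∑ i, a i) * (∑ i, b i) * (∑ i, c i) / n ^ 3) ^ n := by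
    calc m ^ n = ∏ _i : Fin n, m := by simp
      _ ≤ ∏ i, a i * b i * c i := by
          refine Finset.prod_le_prod (fun i _ => hmpos.le) fun i _ => ?_
          exact Finset.inf'_le _ (Finset.mem_univ i)
      _ = (∏ i, a i) * (∏ i, b i) * (∏ i, c i) := by
          rw [← Finset.prod_mul_distrib, ← Finset.prod_mul_distrib]
      _ ≤ ((∑ i, a i) / n) ^ n * ((∑ i, b i) / n) ^ n * ((∑ i, c i) / n) ^ n := by
          have hA := amgm hn a fun i => (ha i).le
          have hB := amgm hn b fun i => (hb i).le
          have hCc := amgm hn c fun i => (hc i).le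
          have hna : (0:ℝ) ≤ ((∑ i, a i) / n) ^ n :=
            (Finset.prod_nonneg fun i _ => (ha i).le).trans hA
          have hnb : (0:ℝ) ≤ ((∑ i, b i) / n) ^ n :=
            (Finset.prod_nonneg fun i _ => (hb i).le).trans hB
          exact mul_le_mul (mul_le_mul hA hB (Finset.prod_nonneg fun i _ => (hb i).le) hna)
            hCc (Finset.prod_nonneg fun i _ => (hc i).le) (mul_nonneg hna hnb)
      _ = ((∑ i, a i) * (∑ i, b i) * (∑ i, c i) / n ^ 3) ^ n := by
          rw [← mul_pow, ← mul_pow]; ring_nf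
  have hR : (0:ℝ) ≤ (∑ i, a i) * (∑ i, b i) * (∑ i, c i) / n ^ 3 := by
    have := Finset.sum_pos (fun i _ => ha i) hne
    have := Finset.sum_pos (fun i _ => hb i) hne
    have := Finset.sum_pos (fun i _ => hc i) hne
    positivity
  exact le_of_pow_le_pow_left₀ hn.ne' hR hpown

theorem stmt18 (C : ℕ) (hC : 2 ≤ C) (μ θ : Fin C → ℝ)
    (hμ : ∀ v, 0 < μ v) (hsum : ∑ v, μ v = 1)
    (hθ0 : ∀ v, 0 ≤ θ v) (hθ1 : ∀ v, θ v ≤ 1) (hmono : StrictMono θ) :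
    (Finset.univ.inf' ⟨(⟨0, by omega⟩ : Fin (C - 1)), Finset.mem_univ _⟩
        (fun v : Fin (C - 1) =>
          μ (v.castLE (by omega)) * μ (v.succ.cast (by omega))
            * (θ (v.succ.cast (by omega)) - θ (v.castLE (by omega))))
      ≤ (1 - μ ⟨C - 1, by omega⟩) * (1 - μ ⟨0, by omega⟩)
          * (θ ⟨C - 1, by omega⟩ - θ ⟨0, by omega⟩) / ((C : ℝ) - 1) ^ 3)
    ∧ (Finset.univ.inf' ⟨(⟨0, by omega⟩ : Fin (C - 1)), Finset.mem_univ _⟩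
        (fun v : Fin (C - 1) =>
          μ (v.castLE (by omega)) * μ (v.succ.cast (by omega))
            * (θ (v.succ.cast (by omega)) - θ (v.castLE (by omega))))
      ≤ θ ⟨C - 1, by omega⟩ / ((C : ℝ) - 1) ^ 3) := by
  obtain ⟨n, rfl⟩ : ∃ n, C = n + 1 := ⟨C - 1, by omega⟩
  have hn : 0 < n := by omega
  have hC1 : (n + 1 : ℕ) - 1 = n := rfl
  set a : Fin n → ℝ := fun v => μ (v.castLE (by omega)) with ha_def
  set b : Fin n → ℝ := fun v => μ (v.succ.cast (by omega)) with hb_def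
  set c : Fin n → ℝ := fun v => θ (v.succ.cast (by omega)) - θ (v.castLE (by omega)) with hc_def
  have hne : (Finset.univ : Finset (Fin n)).Nonempty := ⟨⟨0, hn⟩, Finset.mem_univ _⟩
  have hcpos : ∀ v : Fin n, 0 < c v := by
    intro v
    have : (v.castLE (by omega : n ≤ n + 1)) < (v.succ.cast (by omega)) := by
      rw [Fin.lt_def]; simp
    exact sub_pos.mpr (hmono this)
  have hA : ∑ v, a v = 1 - μ ⟨n, by omega⟩ := by
    rw [← hsum, Fin.sum_univ_castSucc]
    have : ∀ v : Fin n, a v = μ v.castSucc := fun v => rfl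
    simp only [this]
    have : (Fin.last n) = (⟨n, by omega⟩ : Fin (n+1)) := rfl
    rw [this]; ring
  have hB : ∑ v, b v = 1 - μ ⟨0, by omega⟩ := by
    rw [← hsum, Fin.sum_univ_succ]
    have h1 : ∀ v : Fin n, b v = μ v.succ := fun v => rfl
    have h2 : (0 : Fin (n+1)) = (⟨0, by omega⟩ : Fin (n+1)) := rfl
    simp only [h1, h2]; ring
  have hCs : ∑ v, c v = θ ⟨n, by omega⟩ - θ ⟨0, by omega⟩ := by
    have f : ℕ → ℝ := fun i => 0
    set g : ℕ → ℝ := fun i => if h : i < n + 1 then θ ⟨i, h⟩ else 0 with hg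
    have hgv : ∀ v : Fin n, c v = g (v.1 + 1) - g v.1 := by
      intro v
      have h1 : v.1 + 1 < n + 1 := by omega
      have h2 : v.1 < n + 1 := by omega
      simp only [hg, dif_pos h1, dif_pos h2]
      rfl
    calc ∑ v, c v = ∑ i ∈ Finset.range n, (g (i + 1) - g i) := by
          rw [← Fin.sum_univ_eq_sum_range]
          exact Finset.sum_congr rfl fun v _ => hgv v
      _ = g n - g 0 := Finset.sum_range_sub g n
      _ = θ ⟨n, by omega⟩ - θ ⟨0, by omega⟩ := by
          simp only [hg, dif_pos (by omega : n < n + 1), dif_pos (by omega : 0 < n + 1)]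
  have key := min_le_avg3 hn a b c (fun v => hμ _) (fun v => hμ _) hcpos hne
  rw [hA, hB, hCs] at key
  have hcast : ((n + 1 : ℕ) : ℝ) - 1 = (n : ℝ) := by push_cast; ring
  have hfst : Finset.univ.inf' ⟨(⟨0, by omega⟩ : Fin (n + 1 - 1)), Finset.mem_univ _⟩
        (fun v : Fin (n + 1 - 1) =>
          μ (v.castLE (by omega)) * μ (v.succ.cast (by omega))
            * (θ (v.succ.cast (by omega)) - θ (v.castLE (by omega))))
      ≤ (1 - μ ⟨n + 1 - 1, by omega⟩) * (1 - μ ⟨0, by omega⟩)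
          * (θ ⟨n + 1 - 1, by omega⟩ - θ ⟨0, by omega⟩) / (((n + 1 : ℕ) : ℝ) - 1) ^ 3 := by
    rw [hcast]
    exact key
  refine ⟨hfst, hfst.trans ?_⟩
  rw [hcast]
  have h1 : (0:ℝ) ≤ 1 - μ ⟨n + 1 - 1, by omega⟩ := by
    have h : (0:ℝ) ≤ ∑ v, a v := Finset.sum_nonneg fun v _ => (hμ _).le
    rw [hA] at h; exact h
  have h2 : 1 - μ (⟨n + 1 - 1, by omega⟩ : Fin (n+1)) ≤ 1 := by
    have := hμ (⟨n + 1 - 1, by omega⟩ : Fin (n+1)); linarith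
  have h3 : (0:ℝ) ≤ 1 - μ ⟨0, by omega⟩ := by
    have h : (0:ℝ) ≤ ∑ v, b v := Finset.sum_nonneg fun v _ => (hμ _).le
    rw [hB] at h; exact h
  have h4 : 1 - μ (⟨0, by omega⟩ : Fin (n+1)) ≤ 1 := by
    have := hμ (⟨0, by omega⟩ : Fin (n+1)); linarith
  have h5 : (0:ℝ) ≤ θ ⟨n + 1 - 1, by omega⟩ - θ ⟨0, by omega⟩ := by
    have h : (0:ℝ) ≤ ∑ v, c v := Finset.sum_nonneg fun v _ => (hcpos v).le
    rw [hCs] at h; exact h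
  have h6 : θ (⟨n + 1 - 1, by omega⟩ : Fin (n+1)) - θ ⟨0, by omega⟩ ≤ θ ⟨n + 1 - 1, by omega⟩ := by
    have := hθ0 (⟨0, by omega⟩ : Fin (n+1)); linarith
  gcongr ?x / _
  calc (1 - μ ⟨n + 1 - 1, by omega⟩) * (1 - μ ⟨0, by omega⟩)
        * (θ ⟨n + 1 - 1, by omega⟩ - θ ⟨0, by omega⟩)
      ≤ 1 * 1 * (θ ⟨n + 1 - 1, by omega⟩ - θ ⟨0, by omega⟩) := by
        apply mul_le_mul_of_nonneg_right _ h5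
        calc (1 - μ ⟨n + 1 - 1, by omega⟩) * (1 - μ ⟨0, by omega⟩) ≤ 1 * 1 :=
          mul_le_mul h2 h4 h3 (by norm_num)
        _ = 1 * 1 := rfl
    _ ≤ θ ⟨n + 1 - 1, by omega⟩ := by rw [one_mul, one_mul]; exact h6
end

section
/- Let C ≥ 3, let μ_1, …, μ_C be positive reals with Σ_{v=1}^{C} μ_v = 1, and let 0 ≤ θ_1 < θ_2 < ⋯ < θ_C ≤ 1. For v ∈ {2, …, C−1} define μ'_{v−1} := μ_v·(θ_v − θ_{v−1})/(θ_{v+1} − θ_{v−1}) and μ'_{v+1} := μ_v·(θ_{v+1} − θ_v)/(θ_{v+1} − θ_{v−1}). Then min_{2 ≤ v ≤ C−1} μ'_{v−1}·μ'_{v+1}·(θ_{v+1} − θ_{v−1}) ≤ (1 − μ_C − μ_1)²·(θ_C − θ_2)/(C − 2)³, and consequently this minimum is at most θ_C/(C − 2)³. -/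
open Finset

private lemma amgm_aux {n : ℕ} (hn : 0 < n) (x : Fin n → ℝ) (hx : ∀ i, 0 ≤ x i) :
    ∏ i, x i ≤ ((∑ i, x i) / n) ^ n := by
  have hn' : (0:ℝ) < n := by exact_mod_cast hn
  have h := Real.geom_mean_le_arith_mean_weighted univ (fun _ => (n:ℝ)⁻¹) x
    (fun _ _ => by positivity)
    (by simp [card_univ]; field_simp)
    (fun i _ => hx i)
  have hpn : ∀ i : Fin n, (x i ^ ((n:ℝ)⁻¹)) ^ n = x i := by
    intro i
    rw [← Real.rpow_natCast (x i ^ ((n:ℝ)⁻¹)) n, ← Real.rpow_mul (hx i)]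
    rw [inv_mul_cancel₀ (ne_of_gt hn'), Real.rpow_one]
  calc ∏ i, x i = (∏ i, x i ^ ((n:ℝ)⁻¹)) ^ n := by
        rw [← prod_pow]
        exact (prod_congr rfl fun i _ => (hpn i)).symm
    _ ≤ (∑ i, (n:ℝ)⁻¹ * x i) ^ n := by
        apply pow_le_pow_left₀ (prod_nonneg fun i _ => Real.rpow_nonneg (hx i) _) h
    _ = ((∑ i, x i) / n) ^ n := by rw [← mul_sum, inv_mul_eq_div]

private lemma min_le_aux {n : ℕ} (hn : 0 < n) (H : (univ : Finset (Fin n)).Nonempty)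
    (F a d : Fin n → ℝ) (ha : ∀ w, 0 ≤ a w) (hd : ∀ w, 0 ≤ d w)
    (hF : ∀ w, F w ≤ a w ^ 2 * d w)
    (S T : ℝ) (hS : ∑ w, a w ≤ S) (hT : ∑ w, d w ≤ T) :
    univ.inf' H F ≤ S ^ 2 * T / (n : ℝ) ^ 3 := by
  have hn' : (0:ℝ) < n := by exact_mod_cast hn
  have hS0 : 0 ≤ S := le_trans (sum_nonneg fun w _ => ha w) hS
  have hT0 : 0 ≤ T := le_trans (sum_nonneg fun w _ => hd w) hT
  set m := univ.inf' H F with hm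
  have hmle : ∀ w, m ≤ F w := fun w => inf'_le _ (mem_univ w)
  rcases le_or_gt m 0 with h | h
  · exact h.trans (by positivity)
  · have key : m ^ n ≤ ((S / n) ^ 2 * (T / n)) ^ n := by
      have h1 : m ^ n ≤ ∏ w, (a w ^ 2 * d w) := by
        calc m ^ n = ∏ _w : Fin n, m := by
              rw [prod_const, card_univ, Fintype.card_fin]
          _ ≤ _ := prod_le_prod (fun _ _ => h.le) (fun w _ => (hmle w).trans (hF w))
      have h2 : ∏ w, (a w ^ 2 * d w) = (∏ w, a w) ^ 2 * ∏ w, d w := by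
        rw [prod_mul_distrib, prod_pow]
      have h3 : ∏ w, a w ≤ (S / n) ^ n := by
        refine le_trans (amgm_aux hn a ha) ?_
        exact pow_le_pow_left₀ (div_nonneg (sum_nonneg fun w _ => ha w) hn'.le)
          ((div_le_div_iff_of_pos_right hn').mpr hS) n
      have h4 : ∏ w, d w ≤ (T / n) ^ n := by
        refine le_trans (amgm_aux hn d hd) ?_
        exact pow_le_pow_left₀ (div_nonneg (sum_nonneg fun w _ => hd w) hn'.le)
          ((div_le_div_iff_of_pos_right hn').mpr hT) n
      calc m ^ n ≤ (∏ w, a w) ^ 2 * ∏ w, d w := h2 ▸ h1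
        _ ≤ ((S / n) ^ n) ^ 2 * (T / n) ^ n := by
            apply mul_le_mul (pow_le_pow_left₀ (prod_nonneg fun w _ => ha w) h3 2)
              h4 (prod_nonneg fun w _ => hd w) (by positivity)
        _ = ((S / n) ^ 2 * (T / n)) ^ n := by
            rw [mul_pow, ← pow_mul, ← pow_mul, Nat.mul_comm]
    have := (pow_le_pow_iff_left₀ h.le (by positivity) (Nat.pos_iff_ne_zero.mp hn)).mp key
    calc m ≤ (S / n) ^ 2 * (T / n) := this
      _ = S ^ 2 * T / (n:ℝ) ^ 3 := by rw [div_pow, div_mul_div_comm, ← pow_succ]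


private theorem main_aux (C : ℕ) (hC : 2 < C) (μ θ : Fin C → ℝ)
    (hμ : ∀ v, 0 < μ v) (hsum : ∑ v, μ v = 1)
    (hθ0 : ∀ v, 0 ≤ θ v) (hmono : StrictMono θ)
    (F : Fin (C - 2) → ℝ)
    (hFeq : ∀ w : Fin (C - 2), F w =
      (μ ⟨w.val + 1, by have := w.isLt; omega⟩
          * (θ ⟨w.val + 1, by have := w.isLt; omega⟩ - θ ⟨w.val, by have := w.isLt; omega⟩)
          / (θ ⟨w.val + 2, by have := w.isLt; omega⟩ - θ ⟨w.val, by have := w.isLt; omega⟩))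
        * (μ ⟨w.val + 1, by have := w.isLt; omega⟩
          * (θ ⟨w.val + 2, by have := w.isLt; omega⟩ - θ ⟨w.val + 1, by have := w.isLt; omega⟩)
          / (θ ⟨w.val + 2, by have := w.isLt; omega⟩ - θ ⟨w.val, by have := w.isLt; omega⟩))
        * (θ ⟨w.val + 2, by have := w.isLt; omega⟩ - θ ⟨w.val, by have := w.isLt; omega⟩))
    (H : (univ : Finset (Fin (C - 2))).Nonempty) :
    (univ.inf' H F ≤ (1 - μ ⟨C - 1, by omega⟩ - μ ⟨0, by omega⟩) ^ 2
          * (θ ⟨C - 1, by omega⟩ - θ ⟨1, by omega⟩) / ((C : ℝ) - 2) ^ 3)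
    ∧ (univ.inf' H F ≤ θ ⟨C - 1, by omega⟩ / ((C : ℝ) - 2) ^ 3) := by
  have hn : 0 < C - 2 := by omega
  have hv1 : ∀ w : Fin (C - 2), w.val + 1 < C := fun w => by have := w.isLt; omega
  have hv2 : ∀ w : Fin (C - 2), w.val + 2 < C := fun w => by have := w.isLt; omega
  have hv0 : ∀ w : Fin (C - 2), w.val < C := fun w => by have := w.isLt; omega
  let a : Fin (C - 2) → ℝ := fun w => μ ⟨w.val + 1, hv1 w⟩
  let d : Fin (C - 2) → ℝ := fun w => θ ⟨w.val + 2, hv2 w⟩ - θ ⟨w.val + 1, hv1 w⟩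
  have ha : ∀ w, 0 < a w := fun w => hμ _
  have hd : ∀ w, 0 < d w := fun w =>
    sub_pos.mpr (hmono (show (⟨w.val + 1, hv1 w⟩ : Fin C) < ⟨w.val + 2, hv2 w⟩ by
      simp [Fin.lt_def]))
  -- sum identities via ℕ-indexed functions
  let g : ℕ → ℝ := fun i => if h : i < C then μ ⟨i, h⟩ else 0
  let gθ : ℕ → ℝ := fun i => if h : i < C then θ ⟨i, h⟩ else 0
  have hgsum : ∑ i ∈ range C, g i = 1 := by
    rw [← Fin.sum_univ_eq_sum_range g C, ← hsum]
    refine sum_congr rfl fun i _ => ?_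
    simp only [g, dif_pos i.isLt]
  have hCeq : C = (C - 2) + 1 + 1 := by omega
  have hsplit : ∑ i ∈ range C, g i
      = (∑ i ∈ range (C - 2), g (i + 1)) + g 0 + g ((C - 2) + 1) := by
    conv_lhs => rw [hCeq]
    rw [sum_range_succ, sum_range_succ']
  have hgC : g ((C - 2) + 1) = μ ⟨C - 1, by omega⟩ := by
    simp only [g]
    rw [dif_pos (by omega)]
    congr 1
    exact Fin.ext (by simp; omega)
  have hg0 : g 0 = μ ⟨0, by omega⟩ := by
    simp only [g]; rw [dif_pos (by omega)]
  have hSa : ∑ w : Fin (C - 2), a w = 1 - μ ⟨C - 1, by omega⟩ - μ ⟨0, by omega⟩ := by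
    have e : ∑ w : Fin (C - 2), a w = ∑ i ∈ range (C - 2), g (i + 1) := by
      rw [← Fin.sum_univ_eq_sum_range (fun i => g (i + 1)) (C - 2)]
      refine sum_congr rfl fun w _ => ?_
      simp only [a, g]
      rw [dif_pos (hv1 w)]
    rw [e]
    have h2 := hsplit
    rw [hgsum, hgC, hg0] at h2
    linarith
  have hTd : ∑ w : Fin (C - 2), d w = θ ⟨C - 1, by omega⟩ - θ ⟨1, by omega⟩ := by
    have ht : ∑ i ∈ range (C - 2),
          ((fun i => gθ (i + 1)) (i + 1) - (fun i => gθ (i + 1)) i)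
        = gθ ((C - 2) + 1) - gθ 1 := sum_range_sub (fun i => gθ (i + 1)) (C - 2)
    have e : ∑ w : Fin (C - 2), d w
        = ∑ i ∈ range (C - 2), (gθ (i + 1 + 1) - gθ (i + 1)) := by
      rw [← Fin.sum_univ_eq_sum_range (fun i => gθ (i + 1 + 1) - gθ (i + 1)) (C - 2)]
      refine sum_congr rfl fun w _ => ?_
      simp only [d, gθ]
      rw [dif_pos (by have := w.isLt; omega : w.val + 1 + 1 < C), dif_pos (hv1 w)]
    rw [e, ht]
    simp only [gθ]
    rw [dif_pos (by omega : (C - 2) + 1 < C), dif_pos (by omega : 1 < C)]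
    congr 2
    exact Fin.ext (by simp; omega)
  -- pointwise bound
  have hF : ∀ w, F w ≤ a w ^ 2 * d w := by
    intro w
    rw [hFeq w]
    have hApos : 0 < θ (⟨w.val + 1, hv1 w⟩ : Fin C) - θ ⟨w.val, hv0 w⟩ :=
      sub_pos.mpr (hmono (by simp [Fin.lt_def]))
    have hBpos : 0 < d w := hd w
    have hccpos : 0 < θ (⟨w.val + 2, hv2 w⟩ : Fin C) - θ ⟨w.val, hv0 w⟩ := by
      have : θ (⟨w.val + 2, hv2 w⟩ : Fin C) - θ ⟨w.val, hv0 w⟩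
          = (θ ⟨w.val + 1, hv1 w⟩ - θ ⟨w.val, hv0 w⟩) + d w := by simp only [d]; ring
      rw [this]; positivity
    have heq : (μ ⟨w.val + 1, hv1 w⟩
          * (θ ⟨w.val + 1, hv1 w⟩ - θ ⟨w.val, hv0 w⟩)
          / (θ ⟨w.val + 2, hv2 w⟩ - θ ⟨w.val, hv0 w⟩))
        * (μ ⟨w.val + 1, hv1 w⟩
          * (θ ⟨w.val + 2, hv2 w⟩ - θ ⟨w.val + 1, hv1 w⟩)
          / (θ ⟨w.val + 2, hv2 w⟩ - θ ⟨w.val, hv0 w⟩))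
        * (θ ⟨w.val + 2, hv2 w⟩ - θ ⟨w.val, hv0 w⟩)
        = a w ^ 2 * d w * ((θ ⟨w.val + 1, hv1 w⟩ - θ ⟨w.val, hv0 w⟩)
            / (θ ⟨w.val + 2, hv2 w⟩ - θ ⟨w.val, hv0 w⟩)) := by
      simp only [a, d]
      field_simp
    rw [heq]
    have hle1 : (θ (⟨w.val + 1, hv1 w⟩ : Fin C) - θ ⟨w.val, hv0 w⟩)
        / (θ ⟨w.val + 2, hv2 w⟩ - θ ⟨w.val, hv0 w⟩) ≤ 1 := by
      rw [div_le_one hccpos]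
      have : 0 < d w := hd w
      simp only [d] at this
      linarith
    calc a w ^ 2 * d w * _ ≤ a w ^ 2 * d w * 1 :=
          mul_le_mul_of_nonneg_left hle1 (by positivity)
      _ = a w ^ 2 * d w := mul_one _
  have hcast : (((C - 2 : ℕ) : ℝ)) = (C : ℝ) - 2 := by
    have h2 : (2 : ℕ) ≤ C := by omega
    push_cast [Nat.cast_sub h2]
    ring
  have main := min_le_aux hn H F a d (fun w => (ha w).le) (fun w => (hd w).le) hF
    (1 - μ ⟨C - 1, by omega⟩ - μ ⟨0, by omega⟩) (θ ⟨C - 1, by omega⟩ - θ ⟨1, by omega⟩)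
    (le_of_eq hSa) (le_of_eq hTd)
  rw [hcast] at main
  refine ⟨main, le_trans main ?_⟩
  have hSpos : 0 < 1 - μ ⟨C - 1, by omega⟩ - μ ⟨0, by omega⟩ := by
    rw [← hSa]
    exact sum_pos (fun w _ => ha w) H
  have hSle1 : 1 - μ ⟨C - 1, by omega⟩ - μ ⟨0, by omega⟩ ≤ 1 := by
    have := hμ (⟨C - 1, by omega⟩ : Fin C)
    have := hμ (⟨0, by omega⟩ : Fin C)
    linarith
  have hdenpos : (0:ℝ) < ((C : ℝ) - 2) ^ 3 := by
    have h3 : (3:ℝ) ≤ (C:ℝ) := by exact_mod_cast (hC : 3 ≤ C)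
    exact pow_pos (by linarith) 3
  have hθle : θ (⟨1, by omega⟩ : Fin C) ≤ θ ⟨C - 1, by omega⟩ :=
    (hmono (show (⟨1, by omega⟩ : Fin C) < ⟨C - 1, by omega⟩ by
      simp [Fin.lt_def]; omega)).le
  have hnum : (1 - μ ⟨C - 1, by omega⟩ - μ ⟨0, by omega⟩) ^ 2
      * (θ ⟨C - 1, by omega⟩ - θ ⟨1, by omega⟩) ≤ θ ⟨C - 1, by omega⟩ := by
    have hS2 : (1 - μ ⟨C - 1, by omega⟩ - μ ⟨0, by omega⟩) ^ 2 ≤ 1 := by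
      nlinarith [hSpos, hSle1]
    have h1 := mul_le_mul_of_nonneg_right hS2 (by linarith :
      (0:ℝ) ≤ θ ⟨C - 1, by omega⟩ - θ ⟨1, by omega⟩)
    rw [one_mul] at h1
    have h0 := hθ0 (⟨1, by omega⟩ : Fin C)
    linarith
  exact (div_le_div_iff_of_pos_right hdenpos).mpr hnum

theorem stmt19 (C : ℕ) (hC : 3 ≤ C) (μ θ : Fin C → ℝ)
    (hμ : ∀ v, 0 < μ v) (hsum : ∑ v, μ v = 1)
    (hθ0 : ∀ v, 0 ≤ θ v) (hθ1 : ∀ v, θ v ≤ 1) (hmono : StrictMono θ) :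
    (Finset.univ.inf' ⟨(⟨0, by omega⟩ : Fin (C - 2)), Finset.mem_univ _⟩
        (fun w : Fin (C - 2) =>
          (μ (w.succ.castLE (by omega))
              * (θ (w.succ.castLE (by omega)) - θ (w.castLE (by omega)))
              / (θ (w.succ.succ.cast (by omega)) - θ (w.castLE (by omega))))
            * (μ (w.succ.castLE (by omega))
              * (θ (w.succ.succ.cast (by omega)) - θ (w.succ.castLE (by omega)))
              / (θ (w.succ.succ.cast (by omega)) - θ (w.castLE (by omega))))
            * (θ (w.succ.succ.cast (by omega)) - θ (w.castLE (by omega))))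
      ≤ (1 - μ ⟨C - 1, by omega⟩ - μ ⟨0, by omega⟩) ^ 2
          * (θ ⟨C - 1, by omega⟩ - θ ⟨1, by omega⟩) / ((C : ℝ) - 2) ^ 3)
    ∧ (Finset.univ.inf' ⟨(⟨0, by omega⟩ : Fin (C - 2)), Finset.mem_univ _⟩
        (fun w : Fin (C - 2) =>
          (μ (w.succ.castLE (by omega))
              * (θ (w.succ.castLE (by omega)) - θ (w.castLE (by omega)))
              / (θ (w.succ.succ.cast (by omega)) - θ (w.castLE (by omega))))
            * (μ (w.succ.castLE (by omega))
              * (θ (w.succ.succ.cast (by omega)) - θ (w.succ.castLE (by omega)))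
              / (θ (w.succ.succ.cast (by omega)) - θ (w.castLE (by omega))))
            * (θ (w.succ.succ.cast (by omega)) - θ (w.castLE (by omega))))
      ≤ θ ⟨C - 1, by omega⟩ / ((C : ℝ) - 2) ^ 3) := by
  exact main_aux C hC μ θ hμ hsum hθ0 hmono _ (fun w => rfl) _
end
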